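/- Fix s ∈ X, N ≥ 1 and Λ ≥ 1, and assume that for every 0 ≤ k ≤ N−1 one has (∑_{w∈W_k} a_s(w)) · (∑_{w∈W_k} a_s(w)^{-1}) ≤ Λ m^{2k} in [0,∞] (with 1/0 := +∞). Then the uniform splitting flow θ^unif(w,wi) := m^{−(|w|+1)} is a unit flow to depth N whose energy satisfies 𝔈_s(θ^unif) ≤ Λ ∑_{k=0}^{N−1} m^k/(u_{2k+1}(s) − u_{2k}(s)). In particular, R_N(s) ≤ Λ ∑_{k=0}^{N−1} m^k/(u_{2k+1}(s) − u_{2k}(s)). -/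
import Mathlib


open Filter Topology
open scoped BigOperators ComplexOrder ENNReal

/-- A kernel `J : X × X → ℂ` is positive definite: every finite Gram sum
`∑ conj (c α) * c β * J (s α) (s β)` is a nonnegative real number
(using the partial order on `ℂ`). -/
def IsPD {X : Type*} (J : X → X → ℂ) : Prop :=
  ∀ (r : ℕ) (c : Fin r → ℂ) (p : Fin r → X),
    0 ≤ ∑ α, ∑ β, (starRingEnd ℂ) (c α) * c β * J (p α) (p β)

/-- The pullback operator `(LJ)(s,t) = ∑ i, J (φ i s) (φ i t)`. -/
noncomputable def pullback {X : Type*} (m : ℕ) (φ : Fin m → X → X) (J : X → X → ℂ) :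
    X → X → ℂ :=
  fun s t => ∑ i, J (φ i s) (φ i t)

/-- For a word `w = i₁⋯iₙ ∈ {1,…,m}ⁿ`, `phiW φ w = φ_{iₙ} ∘ ⋯ ∘ φ_{i₁}`. -/
def phiW {X : Type*} {m : ℕ} (φ : Fin m → X → X) : {n : ℕ} → (Fin n → Fin m) → X → X
  | 0, _, x => x
  | n + 1, w, x => φ (w (Fin.last n)) (phiW φ (fun i => w i.castSucc) x)

/-- The tower `K₀ = K`, `K_{n+1} = L Kₙ`. -/
noncomputable def tower {X : Type*} (m : ℕ) (φ : Fin m → X → X) (K : X → X → ℂ) :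
    ℕ → X → X → ℂ
  | 0 => K
  | n + 1 => pullback m φ (tower m φ K n)

/-- The diagonal `uₙ(s) = Kₙ(s,s)` (a real number, as `Kₙ` is p.d.). -/
noncomputable def diag {X : Type*} (m : ℕ) (φ : Fin m → X → X) (K : X → X → ℂ)
    (n : ℕ) (s : X) : ℝ :=
  (tower m φ K n s s).re

/-- The diagonal increment `a_s(w) = u_{|w|+1}(φ_w s) − u_{|w|}(φ_w s)`. -/
noncomputable def incr {X : Type*} (m : ℕ) (φ : Fin m → X → X) (K : X → X → ℂ)
    (s : X) {k : ℕ} (w : Fin k → Fin m) : ℝ :=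
  diag m φ K (k + 1) (phiW φ w s) - diag m φ K k (phiW φ w s)

/-- A unit flow to depth `N` on the rooted `m`-ary word tree:
`θ k w i` is the flow through the edge `(w, wi)` with `|w| = k`. -/
def IsUnitFlow (m N : ℕ) (θ : (k : ℕ) → (Fin k → Fin m) → Fin m → ℝ) : Prop :=
  (∀ k, k < N → ∀ (w : Fin k → Fin m) (i : Fin m), 0 ≤ θ k w i) ∧
  (∑ i : Fin m, θ 0 (fun j => j.elim0) i = 1) ∧
  (∀ k, k + 1 < N → ∀ (w : Fin k → Fin m) (i : Fin m),
    θ k w i = ∑ j : Fin m, θ (k + 1) (Fin.snoc w i) j)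

/-- The energy `𝔈_s(θ) = ∑_e θ(e)² / c_s(e) ∈ [0,∞]`, where the edge `(w,wi)`
has conductance `c_s(w,wi) = a_s(w)/m^{|w|+1}` (with `0/0 = 0` and `x/0 = ∞`
for `x > 0`, as in `ℝ≥0∞`). -/
noncomputable def energy {X : Type*} (m : ℕ) (φ : Fin m → X → X) (K : X → X → ℂ)
    (s : X) (N : ℕ) (θ : (k : ℕ) → (Fin k → Fin m) → Fin m → ℝ) : ℝ≥0∞ :=
  ∑ k ∈ Finset.range N, ∑ w : Fin k → Fin m, ∑ i : Fin m,
    ENNReal.ofReal (θ k w i) ^ 2 / ENNReal.ofReal (incr m φ K s w / (m : ℝ) ^ (k + 1))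

/-- The effective resistance `R_N(s)`: infimum of the energy over unit flows to depth `N`. -/
noncomputable def resistance {X : Type*} (m : ℕ) (φ : Fin m → X → X) (K : X → X → ℂ)
    (s : X) (N : ℕ) : ℝ≥0∞ :=
  ⨅ (θ : (k : ℕ) → (Fin k → Fin m) → Fin m → ℝ) (_ : IsUnitFlow m N θ),
    energy m φ K s N θ

/-- The scalar series `S(s) = ∑ₖ m^k / (u_{2k+1}(s) − u_{2k}(s)) ∈ [0,∞]`
(a term with zero denominator being `+∞`). -/
noncomputable def Sser {X : Type*} (m : ℕ) (φ : Fin m → X → X) (K : X → X → ℂ)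
    (s : X) : ℝ≥0∞ :=
  ∑' k : ℕ,
    (m : ℝ≥0∞) ^ k / ENNReal.ofReal (diag m φ K (2 * k + 1) s - diag m φ K (2 * k) s)



lemma pd_pullback {X : Type*} {m : ℕ} {φ : Fin m → X → X} {J : X → X → ℂ}
    (hJ : IsPD J) : IsPD (pullback m φ J) := by
  intro r c p
  calc (0:ℂ)
      ≤ ∑ i : Fin m, ∑ α, ∑ β,
          (starRingEnd ℂ) (c α) * c β * J (φ i (p α)) (φ i (p β)) :=
        Finset.sum_nonneg fun i _ => hJ r c (fun α => φ i (p α))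
    _ = ∑ α, ∑ β, (starRingEnd ℂ) (c α) * c β * pullback m φ J (p α) (p β) := by
        simp only [pullback, Finset.mul_sum]
        rw [Finset.sum_comm]
        exact Finset.sum_congr rfl fun α _ => by rw [Finset.sum_comm]

lemma pd_sub_tower {X : Type*} {m : ℕ} {φ : Fin m → X → X} {K : X → X → ℂ}
    (hsub : IsPD (fun s t => pullback m φ K s t - K s t)) (n : ℕ) :
    IsPD (fun s t => tower m φ K (n + 1) s t - tower m φ K n s t) := by
  induction n with
  | zero => exact hsub
  | succ n ih =>
    have h2 := pd_pullback (φ := φ) ih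
    have : (pullback m φ fun s t => tower m φ K (n + 1) s t - tower m φ K n s t)
        = fun s t => tower m φ K (n + 2) s t - tower m φ K (n + 1) s t := by
      funext s t
      simp [pullback, tower, Finset.sum_sub_distrib]
    rwa [this] at h2

lemma diag_mono {X : Type*} {m : ℕ} {φ : Fin m → X → X} {K : X → X → ℂ}
    (hsub : IsPD (fun s t => pullback m φ K s t - K s t)) (n : ℕ) (x : X) :
    diag m φ K n x ≤ diag m φ K (n + 1) x := by
  have h := pd_sub_tower hsub n 1 (fun _ => 1) (fun _ => x)
  simp only [Fin.sum_univ_one, map_one, one_mul] at h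
  rw [Complex.le_def] at h
  have := h.1
  simp only [Complex.zero_re, Complex.sub_re] at this
  unfold diag; linarith

lemma incr_nonneg {X : Type*} {m : ℕ} {φ : Fin m → X → X} {K : X → X → ℂ}
    (hsub : IsPD (fun s t => pullback m φ K s t - K s t)) (s : X) {k : ℕ}
    (w : Fin k → Fin m) : 0 ≤ incr m φ K s w := by
  have := diag_mono hsub k (phiW φ w s)
  unfold incr; linarith

lemma phiW_snoc {X : Type*} {m : ℕ} (φ : Fin m → X → X) {k : ℕ}
    (w : Fin k → Fin m) (i : Fin m) (x : X) :
    phiW φ (Fin.snoc w i) x = φ i (phiW φ w x) := by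
  simp [phiW, Fin.snoc_last, Fin.snoc_castSucc]

lemma tower_add {X : Type*} (m : ℕ) (φ : Fin m → X → X) (K : X → X → ℂ)
    (k : ℕ) (n : ℕ) (s t : X) :
    tower m φ K (n + k) s t
      = ∑ w : Fin k → Fin m, tower m φ K n (phiW φ w s) (phiW φ w t) := by
  induction k generalizing n s t with
  | zero => simp [phiW]
  | succ k ih =>
    calc tower m φ K (n + (k + 1)) s t
        = ∑ w : Fin k → Fin m, ∑ i : Fin m,
            tower m φ K n (φ i (phiW φ w s)) (φ i (phiW φ w t)) := by
          rw [show n + (k + 1) = (n + 1) + k from by ring, ih]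
          rfl
      _ = ∑ i : Fin m, ∑ w : Fin k → Fin m,
            tower m φ K n (phiW φ (Fin.snoc w i) s) (phiW φ (Fin.snoc w i) t) := by
          rw [Finset.sum_comm]
          simp only [phiW_snoc]
      _ = ∑ p : Fin m × (Fin k → Fin m),
            tower m φ K n (phiW φ (Fin.snoc p.2 p.1) s) (phiW φ (Fin.snoc p.2 p.1) t) := by
          rw [Fintype.sum_prod_type]
      _ = ∑ w : Fin (k + 1) → Fin m, tower m φ K n (phiW φ w s) (phiW φ w t) := by
          exact Fintype.sum_equiv (Fin.snocEquiv fun _ => Fin m) _ _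
            (fun p => by simp [Fin.snocEquiv])

lemma diag_sum_incr {X : Type*} (m : ℕ) (φ : Fin m → X → X) (K : X → X → ℂ)
    (s : X) (k : ℕ) :
    diag m φ K (2 * k + 1) s - diag m φ K (2 * k) s
      = ∑ w : Fin k → Fin m, incr m φ K s w := by
  have h1 : diag m φ K (2 * k + 1) s
      = ∑ w : Fin k → Fin m, diag m φ K (k + 1) (phiW φ w s) := by
    unfold diag
    rw [show 2 * k + 1 = (k + 1) + k from by ring, tower_add, Complex.re_sum]
  have h2 : diag m φ K (2 * k) s
      = ∑ w : Fin k → Fin m, diag m φ K k (phiW φ w s) := by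
    unfold diag
    rw [show 2 * k = k + k from by ring, tower_add, Complex.re_sum]
  rw [h1, h2, ← Finset.sum_sub_distrib]
  rfl

/-- Under the level concentration hypothesis, the uniform splitting flow is a unit flow
whose energy is at most `Λ` times the cutset bound; hence the matching upper bound for
the effective resistance. -/
theorem stmt3 {X : Type*} (m : ℕ) (hm : 1 ≤ m) (φ : Fin m → X → X)
    (K : X → X → ℂ) (hK : IsPD K)
    (hsub : IsPD (fun s t => pullback m φ K s t - K s t))
    (s : X) (N : ℕ) (hN : 1 ≤ N) (Λ : ℝ) (hΛ : 1 ≤ Λ)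
    (hconc : ∀ k : ℕ, k < N →
      (∑ w : Fin k → Fin m, ENNReal.ofReal (incr m φ K s w)) *
          (∑ w : Fin k → Fin m, (ENNReal.ofReal (incr m φ K s w))⁻¹)
        ≤ ENNReal.ofReal Λ * (m : ℝ≥0∞) ^ (2 * k)) :
    IsUnitFlow m N (fun k _ _ => ((m : ℝ) ^ (k + 1))⁻¹) ∧
    energy m φ K s N (fun k _ _ => ((m : ℝ) ^ (k + 1))⁻¹)
      ≤ ENNReal.ofReal Λ *
        ∑ k ∈ Finset.range N,
          (m : ℝ≥0∞) ^ k /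
            ENNReal.ofReal (diag m φ K (2 * k + 1) s - diag m φ K (2 * k) s) ∧
    resistance m φ K s N
      ≤ ENNReal.ofReal Λ *
        ∑ k ∈ Finset.range N,
          (m : ℝ≥0∞) ^ k /
            ENNReal.ofReal (diag m φ K (2 * k + 1) s - diag m φ K (2 * k) s) := by
  have hm0 : (m : ℝ) ≠ 0 := by positivity
  have hmE0 : (m : ℝ≥0∞) ≠ 0 := by exact_mod_cast (by omega : m ≠ 0)
  have hmEtop : (m : ℝ≥0∞) ≠ ⊤ := ENNReal.natCast_ne_top m
  have hmr : (0:ℝ) < (m:ℝ) := by exact_mod_cast Nat.lt_of_lt_of_le Nat.zero_lt_one hm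
  -- the uniform flow is a unit flow
  have hflow : IsUnitFlow m N (fun k _ _ => ((m : ℝ) ^ (k + 1))⁻¹) := by
    refine ⟨fun k _ w i => by positivity, ?_, ?_⟩
    · simp [Finset.sum_const, Finset.card_univ]
      field_simp
    · intro k _ w i
      simp only [Finset.sum_const, Finset.card_univ, Fintype.card_fin, nsmul_eq_mul]
      rw [pow_succ ((m:ℝ)) (k+1), mul_inv]
      field_simp
  -- notation
  set A : ℕ → ℝ≥0∞ := fun k => ∑ w : Fin k → Fin m, ENNReal.ofReal (incr m φ K s w) with hA
  set B : ℕ → ℝ≥0∞ := fun k => ∑ w : Fin k → Fin m, (ENNReal.ofReal (incr m φ K s w))⁻¹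
    with hB
  have hDA : ∀ k,
      ENNReal.ofReal (diag m φ K (2 * k + 1) s - diag m φ K (2 * k) s) = A k := by
    intro k
    rw [diag_sum_incr, hA]
    exact ENNReal.ofReal_sum_of_nonneg fun w _ => incr_nonneg hsub s w
  have hAtop : ∀ k, A k ≠ ⊤ := fun k =>
    ENNReal.sum_ne_top.mpr fun w _ => ENNReal.ofReal_ne_top
  have hΛ0 : ENNReal.ofReal Λ ≠ 0 := by
    simp only [ne_eq, ENNReal.ofReal_eq_zero, not_le]; linarith
  -- the per-level value of the energy of the uniform flow
  have hEk : ∀ k : ℕ,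
      (∑ w : Fin k → Fin m, ∑ i : Fin m,
        ENNReal.ofReal (((m:ℝ) ^ (k + 1))⁻¹) ^ 2 /
          ENNReal.ofReal (incr m φ K s w / (m : ℝ) ^ (k + 1)))
      = ((m : ℝ≥0∞) ^ k)⁻¹ * B k := by
    intro k
    have hMpos : (0:ℝ) < (m:ℝ) ^ (k + 1) := by positivity
    have hMeq : ENNReal.ofReal ((m:ℝ) ^ (k + 1)) = (m : ℝ≥0∞) ^ (k + 1) := by
      rw [ENNReal.ofReal_pow hmr.le, ENNReal.ofReal_natCast]
    have hM0 : ((m : ℝ≥0∞) ^ (k + 1)) ≠ 0 := pow_ne_zero _ hmE0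
    have hMtop : ((m : ℝ≥0∞) ^ (k + 1)) ≠ ⊤ := ENNReal.pow_ne_top hmEtop
    have hterm : ∀ w : Fin k → Fin m,
        ENNReal.ofReal (((m:ℝ) ^ (k + 1))⁻¹) ^ 2 /
          ENNReal.ofReal (incr m φ K s w / (m : ℝ) ^ (k + 1))
        = ((m : ℝ≥0∞) ^ (k + 1))⁻¹ * (ENNReal.ofReal (incr m φ K s w))⁻¹ := by
      intro w
      rw [ENNReal.ofReal_inv_of_pos hMpos, ENNReal.ofReal_div_of_pos hMpos, hMeq,
        div_eq_mul_inv, ENNReal.inv_div (Or.inl hMtop) (Or.inl hM0), div_eq_mul_inv]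
      calc (((m : ℝ≥0∞) ^ (k + 1))⁻¹) ^ 2 *
            ((m : ℝ≥0∞) ^ (k + 1) * (ENNReal.ofReal (incr m φ K s w))⁻¹)
          = (((m : ℝ≥0∞) ^ (k + 1))⁻¹ * (m : ℝ≥0∞) ^ (k + 1)) *
            (((m : ℝ≥0∞) ^ (k + 1))⁻¹ * (ENNReal.ofReal (incr m φ K s w))⁻¹) := by
            ring
        _ = ((m : ℝ≥0∞) ^ (k + 1))⁻¹ * (ENNReal.ofReal (incr m φ K s w))⁻¹ := by
            rw [ENNReal.inv_mul_cancel hM0 hMtop, one_mul]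
    simp only [hterm, Finset.sum_const, Finset.card_univ, Fintype.card_fin, nsmul_eq_mul]
    rw [hB, Finset.mul_sum]
    refine Finset.sum_congr rfl fun w _ => ?_
    rw [← mul_assoc]
    congr 1
    rw [pow_succ, ENNReal.mul_inv (Or.inl (pow_ne_zero _ hmE0)) (Or.inl (ENNReal.pow_ne_top hmEtop)),
      ← mul_assoc, mul_comm (m : ℝ≥0∞), mul_assoc, ENNReal.mul_inv_cancel hmE0 hmEtop,
      mul_one]
  -- the per-level bound
  have hkbound : ∀ k : ℕ, k < N →
      ((m : ℝ≥0∞) ^ k)⁻¹ * B k ≤ ENNReal.ofReal Λ * (m : ℝ≥0∞) ^ k / A k := by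
    intro k hk
    by_cases hA0 : A k = 0
    · rw [hA0, ENNReal.div_zero (by
        exact mul_ne_zero hΛ0 (pow_ne_zero _ hmE0))]
      exact le_top
    · have hb : B k ≤ (ENNReal.ofReal Λ * (m : ℝ≥0∞) ^ (2 * k)) / A k :=
        (ENNReal.le_div_iff_mul_le (Or.inl hA0) (Or.inl (hAtop k))).mpr
          (by rw [mul_comm]; exact hconc k hk)
      calc ((m : ℝ≥0∞) ^ k)⁻¹ * B k
          ≤ ((m : ℝ≥0∞) ^ k)⁻¹ * ((ENNReal.ofReal Λ * (m : ℝ≥0∞) ^ (2 * k)) / A k) :=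
            mul_le_mul_right hb _
        _ = ENNReal.ofReal Λ * (m : ℝ≥0∞) ^ k / A k := by
            rw [two_mul, pow_add, div_eq_mul_inv, div_eq_mul_inv]
            calc ((m : ℝ≥0∞) ^ k)⁻¹ *
                  (ENNReal.ofReal Λ * ((m : ℝ≥0∞) ^ k * (m : ℝ≥0∞) ^ k) * (A k)⁻¹)
                = (((m : ℝ≥0∞) ^ k)⁻¹ * (m : ℝ≥0∞) ^ k) *
                  (ENNReal.ofReal Λ * (m : ℝ≥0∞) ^ k * (A k)⁻¹) := by ring
              _ = ENNReal.ofReal Λ * (m : ℝ≥0∞) ^ k * (A k)⁻¹ := by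
                  rw [ENNReal.inv_mul_cancel (pow_ne_zero _ hmE0)
                    (ENNReal.pow_ne_top hmEtop), one_mul]
  -- the energy bound
  have henergy : energy m φ K s N (fun k _ _ => ((m : ℝ) ^ (k + 1))⁻¹)
      ≤ ENNReal.ofReal Λ *
        ∑ k ∈ Finset.range N,
          (m : ℝ≥0∞) ^ k /
            ENNReal.ofReal (diag m φ K (2 * k + 1) s - diag m φ K (2 * k) s) := by
    rw [energy, Finset.mul_sum]
    refine Finset.sum_le_sum fun k hk => ?_
    rw [hEk k, hDA k, ← mul_div_assoc]
    exact hkbound k (Finset.mem_range.mp hk)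
  exact ⟨hflow, henergy, le_trans (iInf₂_le _ hflow) henergy⟩
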